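/- There exists a unique element π in the maximal ideal of R = Z_p[[T]] such that E(π) = 1 + T, where E is the Artin–Hasse exponential. -/

import Mathlib

open PowerSeries Finset

section Aux

variable {A : Type*} [CommRing A]

private lemma aux_pow_sub_pow {x a b : A} (ha : x ∣ a) (hb : x ∣ b) {m : ℕ}
    (h : x ^ m ∣ a - b) (k : ℕ) : x ^ (m + 1) ∣ a ^ (k + 2) - b ^ (k + 2) := by
  rw [← geom_sum₂_mul, pow_succ]
  have hgs : x ∣ ∑ i ∈ range (k + 2), a ^ i * b ^ (k + 2 - 1 - i) := by
    refine Finset.dvd_sum fun i _ => ?_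
    rcases Nat.eq_zero_or_pos i with h0 | h0
    · subst h0
      have h2 : k + 2 - 1 - 0 = k + 1 := by omega
      rw [h2, pow_zero, one_mul]
      exact dvd_pow hb (Nat.succ_ne_zero k)
    · exact dvd_mul_of_dvd_left (dvd_pow ha h0.ne') _
  rw [mul_comm (x ^ m) x]
  exact mul_dvd_mul hgs h

/-- Successive approximations to the solution of `E(π) = 1 + X`. -/
private noncomputable def ahF (e : ℕ → A) : ℕ → PowerSeries A
  | 0 => 0
  | n + 1 => PowerSeries.X -
      ∑ i ∈ Finset.range n, PowerSeries.C (e (i + 2)) * (ahF e n) ^ (i + 2)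

private lemma ahF_succ (e : ℕ → A) (n : ℕ) :
    ahF e (n + 1) = X - ∑ i ∈ range n, C (e (i + 2)) * (ahF e n) ^ (i + 2) := rfl

private lemma X_dvd_ahF (e : ℕ → A) : ∀ n, (X : PowerSeries A) ∣ ahF e n
  | 0 => dvd_zero _
  | n + 1 => by
    rw [ahF_succ]
    refine dvd_sub dvd_rfl (Finset.dvd_sum fun i _ => ?_)
    exact dvd_mul_of_dvd_right (dvd_pow (X_dvd_ahF e n) (by omega)) _

private lemma ahF_sub_dvd (e : ℕ → A) : ∀ n, (X : PowerSeries A) ^ (n + 1) ∣ ahF e (n + 1) - ahF e n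
  | 0 => by simp [ahF_succ, ahF]
  | n + 1 => by
    have key : ∀ i ∈ range n, (X : PowerSeries A) ^ (n + 2) ∣
        (ahF e (n + 1)) ^ (i + 2) - (ahF e n) ^ (i + 2) :=
      fun i _ => aux_pow_sub_pow (X_dvd_ahF e (n + 1)) (X_dvd_ahF e n) (ahF_sub_dvd e n) i
    have hrw : ahF e (n + 2) - ahF e (n + 1)
        = -(C (e (n + 2)) * (ahF e (n + 1)) ^ (n + 2)) -
          ∑ i ∈ range n, C (e (i + 2)) * ((ahF e (n + 1)) ^ (i + 2) - (ahF e n) ^ (i + 2)) := by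
      rw [ahF_succ e (n + 1), ahF_succ e n, sum_range_succ]
      simp only [mul_sub, Finset.sum_sub_distrib]
      ring
    rw [hrw]
    refine dvd_sub (dvd_neg.2 (dvd_mul_of_dvd_right ?_ _)) (Finset.dvd_sum fun i hi =>
      dvd_mul_of_dvd_right (key i hi) _)
    exact pow_dvd_pow_of_dvd (X_dvd_ahF e (n + 1)) (n + 2)

private lemma coeff_ahF_stable (e : ℕ → A) {j n : ℕ} (h : j ≤ n) :
    coeff j (ahF e n) = coeff j (ahF e j) := by
  induction n with
  | zero => obtain rfl : j = 0 := Nat.le_zero.mp h; rfl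
  | succ n ih =>
    rcases Nat.lt_or_ge j (n + 1) with h' | h'
    · have hd := ahF_sub_dvd e n
      rw [X_pow_dvd_iff] at hd
      have hc := hd j h'
      rw [map_sub, sub_eq_zero] at hc
      rw [hc]
      exact ih (by omega)
    · obtain rfl : j = n + 1 := le_antisymm h h'
      rfl

/-- The limit of the successive approximations. -/
private noncomputable def ahPi (e : ℕ → A) : PowerSeries A :=
  PowerSeries.mk fun j => coeff j (ahF e j)

private lemma coeff_ahPi (e : ℕ → A) {j n : ℕ} (h : j ≤ n) :
    coeff j (ahPi e) = coeff j (ahF e n) := by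
  rw [ahPi, coeff_mk, coeff_ahF_stable e h]

private lemma X_dvd_ahPi (e : ℕ → A) : (X : PowerSeries A) ∣ ahPi e := by
  rw [X_dvd_iff, ← coeff_zero_eq_constantCoeff_apply, coeff_ahPi e (le_refl 0)]
  simp [ahF]

private lemma ahPi_sub_ahF (e : ℕ → A) (n : ℕ) :
    (X : PowerSeries A) ^ (n + 1) ∣ ahPi e - ahF e n := by
  rw [X_pow_dvd_iff]
  intro m hm
  rw [map_sub, coeff_ahPi e (show m ≤ n by omega), sub_self]

private lemma ahKey (e : ℕ → A) (h0 : e 0 = 1) (h1 : e 1 = 1) :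
    ∀ n : ℕ, (X : PowerSeries A) ^ n ∣
      (1 + X) - ∑ k ∈ range n, C (e k) * (ahPi e) ^ k
  | 0 => by simp
  | 1 => by
    simp [h0]
  | (m + 2) => by
    have hsum : ∑ k ∈ range (m + 2), C (e k) * (ahPi e) ^ k
        = (∑ i ∈ range m, C (e (i + 2)) * (ahPi e) ^ (i + 2))
          + C (e 1) * (ahPi e) ^ 1 + C (e 0) * (ahPi e) ^ 0 := by
      rw [Finset.sum_range_succ' _ (m + 1), Finset.sum_range_succ' _ m]
    have hrw : (1 + X) - ∑ k ∈ range (m + 2), C (e k) * (ahPi e) ^ k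
        = (ahF e (m + 1) - ahPi e)
          + ∑ i ∈ range m, C (e (i + 2)) * ((ahF e m) ^ (i + 2) - (ahPi e) ^ (i + 2)) := by
      rw [hsum, h0, h1, map_one, one_mul, one_mul, pow_one, pow_zero, ahF_succ]
      simp only [mul_sub, Finset.sum_sub_distrib]
      ring
    rw [hrw]
    refine dvd_add ?_ (Finset.dvd_sum fun i _ => dvd_mul_of_dvd_right ?_ _)
    · rw [← neg_sub]
      exact dvd_neg.2 (ahPi_sub_ahF e (m + 1))
    · exact aux_pow_sub_pow (X_dvd_ahF e m) (X_dvd_ahPi e)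
        (by rw [← neg_sub]; exact dvd_neg.2 (ahPi_sub_ahF e m)) i

/-- Coefficients of elements of `(C q, X)^n` are highly divisible by `q`. -/
private lemma coeff_dvd_of_mem_pow (q : A) :
    ∀ n : ℕ, ∀ g : PowerSeries A, g ∈ (Ideal.span {C q, X}) ^ n →
      ∀ j : ℕ, q ^ (n - j) ∣ coeff j g
  | 0 => by intro g _ j; simp
  | n + 1 => by
    intro g hg
    rw [pow_succ] at hg
    refine Submodule.mul_induction_on hg (fun a ha b hb => ?_)
      (fun x y hx hy j => by rw [map_add]; exact dvd_add (hx j) (hy j))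
    obtain ⟨u, v, huv⟩ := Ideal.mem_span_pair.mp hb
    intro j
    have hab : a * b = C q * (a * u) + (a * v) * X := by rw [← huv]; ring
    rw [hab, map_add]
    refine dvd_add ?_ ?_
    · rw [coeff_C_mul]
      have hd : q ^ (n - j) ∣ coeff j (a * u) :=
        coeff_dvd_of_mem_pow q n (a * u) (Ideal.mul_mem_right u _ ha) j
      rcases le_or_gt j n with hj | hj
      · have : n + 1 - j = (n - j) + 1 := by omega
        rw [this, pow_succ, mul_comm]
        exact mul_dvd_mul dvd_rfl hd
      · have : n + 1 - j = 0 := by omega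
        rw [this, pow_zero]
        exact one_dvd _
    · rw [← pow_one (X : PowerSeries A), coeff_mul_X_pow']
      split_ifs with hj
      · have : n + 1 - j = n - (j - 1) := by omega
        rw [this]
        exact coeff_dvd_of_mem_pow q n (a * v) (Ideal.mul_mem_right v _ ha) (j - 1)
      · exact dvd_zero _

private lemma padic_eq_zero_of_forall_dvd {p : ℕ} [hp : Fact p.Prime] (x : ℤ_[p])
    (h : ∀ k : ℕ, (p : ℤ_[p]) ^ k ∣ x) : x = 0 := by
  have hnorm : ∀ k : ℕ, ‖x‖ ≤ (p : ℝ) ^ (-(k : ℤ)) := by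
    intro k
    rw [PadicInt.norm_le_pow_iff_mem_span_pow]
    exact Ideal.mem_span_singleton.mpr (h k)
  have hp1 : (1 : ℝ) < (p : ℝ) := by
    exact_mod_cast hp.out.one_lt
  have htend : Filter.Tendsto (fun k : ℕ => (p : ℝ) ^ (-(k : ℤ))) Filter.atTop (nhds 0) := by
    have : ∀ k : ℕ, (p : ℝ) ^ (-(k : ℤ)) = ((p : ℝ)⁻¹) ^ k := by
      intro k
      rw [zpow_neg, zpow_natCast, inv_pow]
    simp only [this]
    exact tendsto_pow_atTop_nhds_zero_of_lt_one (by positivity) (by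
      rw [inv_lt_one_iff₀]; right; exact hp1)
  have hle : ‖x‖ ≤ 0 := ge_of_tendsto' htend (fun k => hnorm k)
  exact norm_le_zero_iff.mp hle

end Aux

/-- In `R = ℤ_p[[T]]` with maximal ideal `m = (p, T)`, there is a unique element
`π ∈ m` such that `E(π) = 1 + T`, where `E ∈ 1 + t + t² ℤ_p[[t]]` is the
Artin–Hasse exponential and `E(π)` is the `m`-adically convergent evaluation,
characterized by `E(π) − Σ_{k<n} E_k π^k ∈ m^n` for all `n`. -/
theorem exists_unique_pi_artinHasse_eq_one_add_T
    (p : ℕ) [Fact p.Prime]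
    (E : PowerSeries ℤ_[p])
    (h0 : PowerSeries.coeff 0 E = 1)
    (h1 : PowerSeries.coeff 1 E = 1) :
    letI m : Ideal (PowerSeries ℤ_[p]) :=
      Ideal.span {(PowerSeries.C (p : ℤ_[p]) : PowerSeries ℤ_[p]), PowerSeries.X}
    ∃! π : PowerSeries ℤ_[p], π ∈ m ∧ ∀ n : ℕ,
      (1 + PowerSeries.X) - ∑ k ∈ Finset.range n,
        PowerSeries.C (R := ℤ_[p]) (PowerSeries.coeff k E) * π ^ k ∈ m ^ n := by
  set m : Ideal (PowerSeries ℤ_[p]) :=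
    Ideal.span {PowerSeries.C (p : ℤ_[p]), PowerSeries.X} with hm
  set e : ℕ → ℤ_[p] := fun k => coeff k E with he
  have he0 : e 0 = 1 := h0
  have he1 : e 1 = 1 := h1
  have hXm : (X : PowerSeries ℤ_[p]) ∈ m := Ideal.subset_span (by simp)
  have hmem_of_dvd : ∀ (n : ℕ) (g : PowerSeries ℤ_[p]),
      (X : PowerSeries ℤ_[p]) ^ n ∣ g → g ∈ m ^ n := by
    intro n g hg
    obtain ⟨c, rfl⟩ := hg
    exact Ideal.mul_mem_right c _ (Ideal.pow_mem_pow hXm n)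
  have hpim : ahPi e ∈ m := by
    obtain ⟨c, hc⟩ := X_dvd_ahPi e
    rw [hc]
    exact Ideal.mul_mem_right c _ hXm
  have hpi : ∀ n : ℕ, (1 + X) - ∑ k ∈ Finset.range n, C (e k) * (ahPi e) ^ k ∈ m ^ n :=
    fun n => hmem_of_dvd n _ (ahKey e he0 he1 n)
  refine ⟨ahPi e, ⟨hpim, hpi⟩, ?_⟩
  rintro π' ⟨hpm', hpi'⟩
  have hdiff : ∀ j : ℕ, π' - ahPi e ∈ m ^ (j + 1) := by
    intro j
    induction j with
    | zero => rw [pow_one]; exact Ideal.sub_mem _ hpm' hpim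
    | succ j ih =>
      have hD : ∑ k ∈ Finset.range (j + 2), C (e k) * (π' ^ k - (ahPi e) ^ k)
          ∈ m ^ (j + 2) := by
        have h := Ideal.sub_mem _ (hpi (j + 2)) (hpi' (j + 2))
        have heq : ((1 + X) - ∑ k ∈ Finset.range (j + 2), C (e k) * (ahPi e) ^ k)
            - ((1 + X) - ∑ k ∈ Finset.range (j + 2), C (e k) * π' ^ k)
            = ∑ k ∈ Finset.range (j + 2), C (e k) * (π' ^ k - (ahPi e) ^ k) := by
          simp only [mul_sub, Finset.sum_sub_distrib]
          ring
        rwa [heq] at h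
      have hsplit : ∑ k ∈ Finset.range (j + 2), C (e k) * (π' ^ k - (ahPi e) ^ k)
          = (∑ i ∈ Finset.range j, C (e (i + 2)) * (π' ^ (i + 2) - (ahPi e) ^ (i + 2)))
            + (π' - ahPi e) := by
        rw [Finset.sum_range_succ' _ (j + 1), Finset.sum_range_succ' _ j]
        simp [he1, he0]
      have hterm : ∀ i ∈ Finset.range j,
          C (e (i + 2)) * (π' ^ (i + 2) - (ahPi e) ^ (i + 2)) ∈ m ^ (j + 2) := by
        intro i _
        refine Ideal.mul_mem_left _ _ ?_
        rw [← geom_sum₂_mul]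
        have hgeom : (∑ t ∈ Finset.range (i + 2), π' ^ t * (ahPi e) ^ (i + 2 - 1 - t)) ∈ m := by
          refine Ideal.sum_mem _ fun t _ => ?_
          rcases Nat.eq_zero_or_pos t with h0t | h0t
          · subst h0t
            have h2 : i + 2 - 1 - 0 = i + 1 := by omega
            rw [h2, pow_zero, one_mul]
            exact Ideal.pow_mem_of_mem _ hpim _ (by omega)
          · exact Ideal.mul_mem_right _ _ (Ideal.pow_mem_of_mem _ hpm' _ h0t)
        have hmm := Ideal.mul_mem_mul hgeom ih
        rwa [← pow_succ'] at hmm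
      have hsum : (∑ i ∈ Finset.range j,
          C (e (i + 2)) * (π' ^ (i + 2) - (ahPi e) ^ (i + 2))) ∈ m ^ (j + 2) :=
        Ideal.sum_mem _ hterm
      rw [hsplit] at hD
      have hfin := Ideal.sub_mem _ hD hsum
      simpa using hfin
  have hcoeff : ∀ j, coeff j (π' - ahPi e) = 0 := by
    intro j
    refine padic_eq_zero_of_forall_dvd _ fun k => ?_
    have hdd := coeff_dvd_of_mem_pow ((p : ℤ_[p])) (j + k + 1) _ (hdiff (j + k)) j
    have harith : (j + k + 1) - j = k + 1 := by omega
    rw [harith] at hdd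
    exact dvd_trans (pow_dvd_pow _ (Nat.le_succ k)) hdd
  have hz : π' - ahPi e = 0 := by
    ext j
    simpa using hcoeff j
  exact sub_eq_zero.mp hz
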